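/- Let $|D| = m+1$ and suppose the product sanitisation mechanism with parent $\mathbb{P}(X_d = d) = 1-pm$, $\mathbb{P}(X_d = d') = p$ for $d' \ne d$, $0 \le p \le \frac{1}{m+1}$, is $(\epsilon,\delta)$-differentially private. Then its error $\mathcal{E} = \max_\mathbf{d} \mathbb{E}[h(X_\mathbf{d},\mathbf{d})] = npm$ satisfies $\frac{1-\delta}{1 + e^\epsilon/m} \le \frac{\mathcal{E}}{n} \le \frac{m}{m+1}$. -/

import Mathlib

open Finset Real

private lemma sum_prod_pi {n : ℕ} {D : Type*} [Fintype D] [DecidableEq D] (f : Fin n → D → ℝ) :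
    ∑ x : Fin n → D, ∏ i, f i (x i) = ∏ i, ∑ a, f i a := by
  rw [Finset.prod_univ_sum, Fintype.piFinset_univ]

private lemma sum_ite_card {D : Type*} [Fintype D] [DecidableEq D] {m : ℕ}
    (hcard : Fintype.card D = m+1) (c : D) (A B : ℝ) :
    ∑ a : D, (if c = a then A else B) = A + m * B := by
  have : ∀ a : D, (if c = a then A else B) = B + (if c = a then A - B else 0) := by
    intro a; by_cases h : c = a <;> simp [h]
  simp_rw [this]
  rw [Finset.sum_add_distrib, Finset.sum_const, Finset.sum_ite_eq, Finset.card_univ, hcard]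
  simp; ring

private lemma prod_ite_hamming {n : ℕ} {D : Type*} [Fintype D] [DecidableEq D]
    (q p : ℝ) (d x : Fin n → D) :
    q ^ (n - hammingDist d x) * p ^ hammingDist d x = ∏ i, (if d i = x i then q else p) := by
  rw [Finset.prod_ite, Finset.prod_const, Finset.prod_const]
  congr 2
  have h1 : ({i | d i = x i} : Finset (Fin n)).card + ({i | d i ≠ x i} : Finset (Fin n)).card = n := by
    rw [Finset.card_filter_add_card_filter_not]
    simp
  rw [hammingDist]
  omega

theorem stmt_15 {D : Type*} [Fintype D] [DecidableEq D] (m n : ℕ) (hm : 1 ≤ m) (hn : 1 ≤ n)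
    (hcard : Fintype.card D = m + 1) (p ε δ : ℝ) (hp0 : 0 ≤ p) (hp1 : p ≤ 1 / (m + 1))
    (hε : 0 ≤ ε) (hδ0 : 0 ≤ δ) (hδ1 : δ < 1)
    (P : (Fin n → D) → (Fin n → D) → ℝ)
    (hP : ∀ d x, P d x = (1 - p * m) ^ (n - hammingDist d x) * p ^ hammingDist d x)
    (hDP : ∀ d d' : Fin n → D, hammingDist d d' = 1 → ∀ A : Finset (Fin n → D),
        ∑ x ∈ A, P d x ≤ Real.exp ε * ∑ x ∈ A, P d' x + δ)
    (E : ℝ)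
    (hE : IsGreatest (Set.range (fun d : Fin n → D =>
        ∑ x : Fin n → D, (hammingDist d x : ℝ) * P d x)) E) :
    E = n * p * m ∧
      (1 - δ) / (1 + Real.exp ε / m) ≤ E / n ∧ E / n ≤ (m : ℝ) / (m + 1) := by
  set q : ℝ := 1 - p * m with hq
  have hPprod : ∀ d x : Fin n → D, P d x = ∏ i, (if d i = x i then q else p) := by
    intro d x; rw [hP, prod_ite_hamming]
  -- Step 1: the expected value is n * p * m for every d
  have hsum : ∀ d : Fin n → D,
      ∑ x : Fin n → D, (hammingDist d x : ℝ) * P d x = n * p * m := by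
    intro d
    have hdist : ∀ x : Fin n → D,
        (hammingDist d x : ℝ) = ∑ i, (if d i = x i then (0:ℝ) else 1) := by
      intro x
      rw [hammingDist]
      rw [Finset.sum_ite, Finset.sum_const, Finset.sum_const]
      simp
    have key : ∀ x : Fin n → D, (hammingDist d x : ℝ) * P d x =
        ∑ i, ∏ j, (if j = i then (if d j = x j then (0:ℝ) else p)
            else (if d j = x j then q else p)) := by
      intro x
      rw [hdist, hPprod, Finset.sum_mul]
      refine Finset.sum_congr rfl fun i _ => ?_
      rw [← Finset.mul_prod_erase univ _ (Finset.mem_univ i)]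
      rw [← Finset.mul_prod_erase univ
        (fun j => if j = i then (if d j = x j then (0:ℝ) else p)
            else (if d j = x j then q else p)) (Finset.mem_univ i)]
      have : ∀ j ∈ univ.erase i,
          (if j = i then (if d j = x j then (0:ℝ) else p) else (if d j = x j then q else p))
            = (if d j = x j then q else p) := by
        intro j hj
        rw [if_neg (Finset.ne_of_mem_erase hj)]
      rw [Finset.prod_congr rfl this, if_pos rfl]
      by_cases h : d i = x i <;> simp [h] <;> ring
    simp_rw [key]
    rw [Finset.sum_comm]
    have : ∀ i : Fin n, ∑ x : Fin n → D, ∏ j, (if j = i then (if d j = x j then (0:ℝ) else p)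
            else (if d j = x j then q else p)) = p * m := by
      intro i
      rw [sum_prod_pi (fun j a => if j = i then (if d j = a then (0:ℝ) else p)
            else (if d j = a then q else p))]
      have : ∀ j : Fin n, (∑ a : D, if j = i then (if d j = a then (0:ℝ) else p)
            else (if d j = a then q else p)) = if j = i then p * m else 1 := by
        intro j
        by_cases h : j = i
        · simp only [h, eq_self_iff_true, if_true]
          rw [sum_ite_card hcard]
          ring
        · simp only [if_neg h]
          rw [sum_ite_card hcard, hq]
          ring
      rw [Finset.prod_congr rfl (fun j _ => this j), Finset.prod_ite_eq']
      simp
    simp_rw [this]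
    simp
    ring
  -- Step 2: E = n p m
  have hD1 : 0 < Fintype.card D := by omega
  have hDne : Nonempty D := Fintype.card_pos_iff.mp hD1
  obtain ⟨d0⟩ := hDne
  have hEeq : E = n * p * m := by
    obtain ⟨d, hd⟩ := hE.1
    have hd2 : ∑ x : Fin n → D, (hammingDist d x : ℝ) * P d x = E := hd
    rw [← hd2, hsum]
  refine ⟨hEeq, ?_, ?_⟩
  · -- lower bound, using DP
    have hcard2 : 2 ≤ Fintype.card D := by omega
    obtain ⟨d1, hd1⟩ := Fintype.exists_ne_of_one_lt_card (by omega) d0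
    set i0 : Fin n := ⟨0, hn⟩ with hi0
    set d : Fin n → D := fun _ => d0 with hd
    set d' : Fin n → D := Function.update d i0 d1 with hd'
    have hdd' : hammingDist d d' = 1 := by
      rw [hammingDist]
      have : ({i | d i ≠ d' i} : Finset (Fin n)) = {i0} := by
        ext j
        simp only [Finset.mem_filter, Finset.mem_univ, true_and, Finset.mem_singleton]
        by_cases h : j = i0
        · subst h; simp [hd', hd, Function.update_self, hd1.symm]
        · simp [hd', hd, Function.update_of_ne h, h]
      rw [this]; simp
    set A : Finset (Fin n → D) := {x | x i0 = d0} with hA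
    -- sum over A of P d x = q
    have hsum1 : ∑ x ∈ A, P d x = q := by
      rw [Finset.sum_filter]
      have : ∀ x : Fin n → D, (if x i0 = d0 then P d x else 0)
          = ∏ j, (if j = i0 then (if d j = x j then q else 0) else (if d j = x j then q else p)) := by
        intro x
        rw [hPprod]
        rw [← Finset.mul_prod_erase univ _ (Finset.mem_univ i0),
            ← Finset.mul_prod_erase univ
              (fun j => if j = i0 then (if d j = x j then q else 0) else (if d j = x j then q else p))
              (Finset.mem_univ i0)]
        have h2 : ∀ j ∈ univ.erase i0,
            (if j = i0 then (if d j = x j then q else 0) else (if d j = x j then q else p))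
              = (if d j = x j then q else p) := fun j hj => if_neg (Finset.ne_of_mem_erase hj)
        rw [Finset.prod_congr rfl h2, if_pos rfl]
        by_cases h : x i0 = d0
        · have : d i0 = x i0 := by simp [hd, h]
          simp [h, this]
        · have : ¬ (d i0 = x i0) := by simp [hd]; exact fun hc => h hc.symm
          simp [h, this]
      rw [Finset.sum_congr rfl (fun x _ => this x)]
      rw [sum_prod_pi (fun j a => if j = i0 then (if d j = a then q else 0)
            else (if d j = a then q else p))]
      have h3 : ∀ j : Fin n, (∑ a : D, if j = i0 then (if d j = a then q else 0)
            else (if d j = a then q else p)) = if j = i0 then q else 1 := by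
        intro j
        by_cases h : j = i0
        · simp only [h, eq_self_iff_true, if_true]; rw [sum_ite_card hcard]; ring
        · simp only [if_neg h]; rw [sum_ite_card hcard, hq]; ring
      rw [Finset.prod_congr rfl (fun j _ => h3 j), Finset.prod_ite_eq']
      simp
    -- sum over A of P d' x = p
    have hsum2 : ∑ x ∈ A, P d' x = p := by
      rw [Finset.sum_filter]
      have : ∀ x : Fin n → D, (if x i0 = d0 then P d' x else 0)
          = ∏ j, (if j = i0 then (if d0 = x j then p else 0) else (if d' j = x j then q else p)) := by
        intro x
        rw [hPprod]
        rw [← Finset.mul_prod_erase univ _ (Finset.mem_univ i0),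
            ← Finset.mul_prod_erase univ
              (fun j => if j = i0 then (if d0 = x j then p else 0) else (if d' j = x j then q else p))
              (Finset.mem_univ i0)]
        have h2 : ∀ j ∈ univ.erase i0,
            (if j = i0 then (if d0 = x j then p else 0) else (if d' j = x j then q else p))
              = (if d' j = x j then q else p) := fun j hj => if_neg (Finset.ne_of_mem_erase hj)
        rw [Finset.prod_congr rfl h2, if_pos rfl]
        have hdi0 : d' i0 = d1 := by simp [hd', Function.update_self]
        by_cases h : x i0 = d0
        · have h5 : ¬ (d' i0 = x i0) := by rw [hdi0, h]; exact hd1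
          have h6 : ¬ (d' i0 = d0) := by rw [hdi0]; exact hd1
          simp [h, h5, h6]
        · have : ¬ (d0 = x i0) := fun hc => h hc.symm
          simp [h, this]
      rw [Finset.sum_congr rfl (fun x _ => this x)]
      rw [sum_prod_pi (fun j a => if j = i0 then (if d0 = a then p else 0)
            else (if d' j = a then q else p))]
      have h3 : ∀ j : Fin n, (∑ a : D, if j = i0 then (if d0 = a then p else 0)
            else (if d' j = a then q else p)) = if j = i0 then p else 1 := by
        intro j
        by_cases h : j = i0
        · simp only [h, eq_self_iff_true, if_true]; rw [sum_ite_card hcard]; ring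
        · simp only [if_neg h]; rw [sum_ite_card hcard, hq]; ring
      rw [Finset.prod_congr rfl (fun j _ => h3 j), Finset.prod_ite_eq']
      simp
    have hDPineq := hDP d d' hdd' A
    rw [hsum1, hsum2] at hDPineq
    -- q ≤ e^ε p + δ, i.e. 1 - δ ≤ p (e^ε + m)
    have hexp : 0 < Real.exp ε := Real.exp_pos ε
    have hm1 : (1:ℝ) ≤ (m:ℝ) := by exact_mod_cast hm
    have hkey : 1 - δ ≤ p * (Real.exp ε + m) := by
      rw [hq] at hDPineq; nlinarith
    have hn1 : (1:ℝ) ≤ (n:ℝ) := by exact_mod_cast hn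
    have hEn : E / n = p * m := by
      rw [hEeq]; field_simp
    rw [hEn]
    rw [div_le_iff₀ (by positivity)]
    have : (1 - δ) ≤ p * m * (1 + Real.exp ε / m) := by
      have : p * m * (1 + Real.exp ε / m) = p * (m + Real.exp ε) := by
        field_simp
      rw [this]
      linarith [hkey]
    linarith
  · -- upper bound
    have hEn : E / n = p * m := by
      have hn1 : (1:ℝ) ≤ (n:ℝ) := by exact_mod_cast hn
      rw [hEeq]; field_simp
    rw [hEn]
    have hmp : (0:ℝ) < (m:ℝ) + 1 := by positivity
    have h1 : p * ((m:ℝ) + 1) ≤ 1 := (le_div_iff₀ hmp).mp hp1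
    rw [le_div_iff₀ hmp]
    nlinarith
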